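/- (Steady-state periodicity) Suppose there exists i ∈ {1,…,n} with b_{i,n} = 0 (which always holds by Lemma 1(i)). Then every sequence b_j, j ∈ {1,…,n}, is eventually periodic with period n: b_{j, k+n} = b_{j, k} for every integer k ≥ n + 1. In particular all n sequences converge to a common repeated pattern of length n. -/

import Mathlib

/-!
STATEMENT 11 (steady-state periodicity). Suppose there exists `i` with
`b_{i,n} = 0` (which always holds by Lemma 1(i)). Then every sequence `b_j` is
eventually periodic with period `n`: `b_{j,k+n} = b_{j,k}` for every `k ≥ n+1`.
In particular all `n` sequences converge to a common repeated pattern of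
length `n`.
-/

open Fin.NatCast

/-- The buffer sequence `(b_{i,j})_{j≥0}` built from `a`, starting cyclically at
index `i`: `b_{i,0} = 0`, `b_{i,j+1} = max{b_{i,j} + a_{σ_i(j+1)}, 0}` where the
cyclic index `σ_i(j+1)` is `i + j` in `Fin n`. -/
noncomputable def bseq {n : ℕ} [NeZero n] (a : Fin n → ℝ) (i : Fin n) : ℕ → ℝ
  | 0 => 0
  | j + 1 => max (bseq a i j + a (i + (j : Fin n))) 0

noncomputable def Ssum {n : ℕ} [NeZero n] (a : Fin n → ℝ) (j : Fin n) (k : ℕ) : ℝ :=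
  ∑ t ∈ Finset.range k, a (j + (t : Fin n))

lemma Ssum_periodic {n : ℕ} [NeZero n] (a : Fin n → ℝ) (ha : ∑ m, a m = 0)
    (j : Fin n) (k : ℕ) : Ssum a j (k + n) = Ssum a j k := by
  unfold Ssum
  rw [Finset.sum_range_add]
  have h : ∑ t ∈ Finset.range n, a (j + ((k + t : ℕ) : Fin n)) = 0 := by
    have : ∀ t : ℕ, ((k + t : ℕ) : Fin n) = (k : Fin n) + (t : Fin n) := by
      intro t; push_cast; ring
    simp only [this]
    have := Fin.sum_univ_eq_sum_range (fun t : ℕ => a (j + ((k : Fin n) + (t : Fin n)))) n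
    rw [← this]
    have e : ∀ i : Fin n, j + ((k : Fin n) + ((i : ℕ) : Fin n)) = (j + (k : Fin n)) + i := by
      intro i; rw [Fin.cast_val_eq_self]; exact (add_assoc _ _ _).symm
    simp only [e]
    calc ∑ i : Fin n, a ((j + (k : Fin n)) + i)
        = ∑ i : Fin n, a i := Equiv.sum_comp (Equiv.addLeft (j + (k : Fin n))) a
      _ = 0 := ha
  rw [h, add_zero]

lemma bseq_eq_Ssum {n : ℕ} [NeZero n] (a : Fin n → ℝ) (j : Fin n) (k : ℕ) :
    bseq a j k = Ssum a j k -
      (Finset.range (k + 1)).inf' (by simp) (Ssum a j) := by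
  induction k with
  | zero => simp [bseq, Ssum]
  | succ k ih =>
    have hS : Ssum a j (k + 1) = Ssum a j k + a (j + (k : Fin n)) := by
      unfold Ssum; rw [Finset.sum_range_succ]
    have hinf : (Finset.range (k + 2)).inf' (by simp) (Ssum a j)
        = min (Ssum a j (k + 1)) ((Finset.range (k + 1)).inf' (by simp) (Ssum a j)) := by
      apply le_antisymm
      · apply le_min
        · exact Finset.inf'_le _ (by simp)
        · apply Finset.le_inf'
          intro m hm
          exact Finset.inf'_le _ (by simp only [Finset.mem_range] at hm ⊢; omega)
      · apply Finset.le_inf'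
        intro m hm
        simp only [Finset.mem_range] at hm
        by_cases h : m = k + 1
        · subst h; exact min_le_left _ _
        · exact le_trans (min_le_right _ _)
            (Finset.inf'_le _ (by simp only [Finset.mem_range]; omega))
    rw [show bseq a j (k+1) = max (bseq a j k + a (j + (k : Fin n))) 0 from rfl, ih, hinf]
    set M := (Finset.range (k + 1)).inf' (by simp) (Ssum a j) with hM
    have hle : M ≤ Ssum a j k := by
      apply Finset.inf'_le; simp
    rcases le_total M (Ssum a j (k+1)) with h | h
    · rw [min_eq_right h, max_eq_left (by rw [hS] at h; linarith), hS]; ring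
    · rw [min_eq_left h, sub_self, max_eq_right (by rw [hS] at h; linarith)]

theorem bseq_eventually_periodic {n : ℕ} [NeZero n] (hn : 2 ≤ n)
    (a : Fin n → ℝ) (ha : ∑ m, a m = 0)
    (hex : ∃ i : Fin n, bseq a i n = 0) :
    ∀ j : Fin n, ∀ k : ℕ, n + 1 ≤ k → bseq a j (k + n) = bseq a j k := by
  intro j k hk
  have hnk : n ≤ k := le_trans (Nat.le_succ n) hk
  rw [bseq_eq_Ssum, bseq_eq_Ssum, Ssum_periodic a ha]
  congr 1
  apply le_antisymm
  · apply Finset.le_inf'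
    intro m hm
    apply Finset.inf'_le
    simp only [Finset.mem_range] at hm ⊢
    omega
  · apply Finset.le_inf'
    intro m hm
    simp only [Finset.mem_range] at hm
    by_cases hmk : m ≤ k
    · apply Finset.inf'_le
      simp only [Finset.mem_range]; omega
    · have hmn : n ≤ m := by omega
      have : Ssum a j m = Ssum a j (m - n) := by
        conv_lhs => rw [show m = (m - n) + n by omega]
        exact Ssum_periodic a ha j (m - n)
      rw [this]
      apply Finset.inf'_le
      simp only [Finset.mem_range]; omega
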